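/- The moment generating function of X ~ BG(μ, σ, δ) at t < 0 is M_X(t) = e^{μt} Γ(1−σt) [2 − 2μδ + μ²δ² + 2σδ(1−μδ)ψ(1−σt) + (σ²δ²/Γ(1−σt)) Γ''(1−σt)] / [1 + δ²σ²π²/6 + (δμ + δσγ − 1)²], where ψ = Γ'/Γ is the digamma function. -/

import Mathlib

open MeasureTheory Real

/-- The Gumbel density with location `μ` and scale `σ`. -/
noncomputable def gumbelPDF (μ σ x : ℝ) : ℝ :=
  (1 / σ) * Real.exp (-((x - μ) / σ) - Real.exp (-((x - μ) / σ)))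

/-- The bimodal Gumbel density. -/
noncomputable def bgPDF (μ σ δ x : ℝ) : ℝ :=
  ((1 - δ * x) ^ 2 + 1) * gumbelPDF μ σ x /
    (1 + δ ^ 2 * σ ^ 2 * π ^ 2 / 6 +
      (δ * μ + δ * σ * Real.eulerMascheroniConstant - 1) ^ 2)

/-- The digamma function `ψ = Γ'/Γ`. -/
noncomputable def digamma (x : ℝ) : ℝ := deriv Real.Gamma x / Real.Gamma x

section Aux

open Set Filter Asymptotics
open scoped Topology

/-- `exp (-t) * (log t)^n`, as a complex-valued function. -/
noncomputable def fC (n : ℕ) : ℝ → ℂ := fun t => ((Real.exp (-t) * Real.log t ^ n : ℝ) : ℂ)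

/-- The real integral `∫ t^(s-1) exp(-t) (log t)^n`, equal to the n-th derivative of Γ. -/
noncomputable def Gn (n : ℕ) (s : ℝ) : ℝ :=
  ∫ t in Ioi (0:ℝ), t ^ (s - 1) * (Real.exp (-t) * Real.log t ^ n)

lemma fC_succ (n : ℕ) : (fun t : ℝ => Real.log t • fC n t) = fC (n + 1) := by
  funext t
  simp only [fC, Complex.real_smul]
  push_cast
  ring

lemma fC_locInt (n : ℕ) : LocallyIntegrableOn (fC n) (Ioi 0) := by
  refine (ContinuousOn.locallyIntegrableOn ?_ measurableSet_Ioi)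
  refine Complex.continuous_ofReal.comp_continuousOn ?_
  exact ((Real.continuous_exp.comp continuous_neg).continuousOn).mul
    ((Real.continuousOn_log.mono (fun x hx => ne_of_gt hx)).pow n)

lemma fC_top (n : ℕ) (a : ℝ) : fC n =O[atTop] (· ^ (-a)) := by
  induction n generalizing a with
  | zero =>
    rw [← isBigO_norm_left]
    simp only [fC, pow_zero, mul_one, Complex.norm_real,
      ← Real.norm_eq_abs]
    rw [isBigO_norm_left]
    simpa only [neg_one_mul] using (isLittleO_exp_neg_mul_rpow_atTop zero_lt_one _).isBigO
  | succ n ih =>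
    rw [← fC_succ]
    exact isBigO_rpow_top_log_smul (lt_add_one a) (ih (a + 1))

lemma rpow_mono_bigO {a b : ℝ} (hab : a ≤ b) :
    (fun x : ℝ => x ^ (-a)) =O[𝓝[>] (0:ℝ)] (· ^ (-b)) := by
  rw [isBigO_iff]
  refine ⟨1, ?_⟩
  filter_upwards [Ioo_mem_nhdsGT_of_mem (by norm_num : (0:ℝ) ∈ Ico 0 1)] with x hx
  rw [one_mul, Real.norm_eq_abs, Real.norm_eq_abs,
    abs_of_pos (Real.rpow_pos_of_pos hx.1 _), abs_of_pos (Real.rpow_pos_of_pos hx.1 _)]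
  exact Real.rpow_le_rpow_of_exponent_ge hx.1 hx.2.le (neg_le_neg hab)

lemma fC_bot (n : ℕ) {b : ℝ} (hb : 0 < b) : fC n =O[𝓝[>] (0:ℝ)] (· ^ (-b)) := by
  induction n generalizing b with
  | zero =>
    refine IsBigO.trans (?_ : fC 0 =O[𝓝[>] (0:ℝ)] (· ^ (-(0:ℝ)))) (rpow_mono_bigO (le_of_lt hb))
    simp_rw [neg_zero, Real.rpow_zero]
    refine isBigO_const_of_tendsto (?_ : Tendsto _ _ (𝓝 (1 : ℂ))) one_ne_zero
    have : Tendsto (fun t : ℝ => ((Real.exp (-t) * Real.log t ^ 0 : ℝ) : ℂ)) (𝓝[>] 0) (𝓝 1) := by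
      simp only [pow_zero, mul_one]
      rw [(by simp : (1 : ℂ) = ((Real.exp (-0) : ℝ) : ℂ))]
      exact ((Complex.continuous_ofReal.comp
        (Real.continuous_exp.comp continuous_neg)).tendsto 0).mono_left nhdsWithin_le_nhds
    exact this
  | succ n ih =>
    rw [← fC_succ]
    exact isBigO_rpow_zero_log_smul (half_lt_self hb) (ih (half_pos hb))

lemma mellinConv_fC (n : ℕ) {s : ℂ} (hs : 0 < s.re) : MellinConvergent (fC n) s :=
  mellinConvergent_of_isBigO_rpow (fC_locInt n) (fC_top n (s.re + 1)) (lt_add_one _)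
    (fC_bot n (half_pos hs)) (half_lt_self hs)

lemma hasDerivAt_mellin_fC (n : ℕ) {s : ℂ} (hs : 0 < s.re) :
    HasDerivAt (mellin (fC n)) (mellin (fC (n + 1)) s) s := by
  have := (mellin_hasDerivAt_of_isBigO_rpow (fC_locInt n) (fC_top n (s.re + 1)) (lt_add_one _)
    (fC_bot n (half_pos hs)) (half_lt_self hs)).2
  rwa [fC_succ] at this

lemma cpow_fC_eq (n : ℕ) {s u : ℝ} (hu : 0 < u) :
    (u:ℂ) ^ ((s:ℂ) - 1) • fC n u = ((u ^ (s-1) * (Real.exp (-u) * Real.log u ^ n) : ℝ) : ℂ) := by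
  rw [fC, smul_eq_mul]
  push_cast [Complex.ofReal_cpow (le_of_lt hu)]
  ring

lemma mellin_fC_ofReal (n : ℕ) {s : ℝ} (_hs : 0 < s) :
    mellin (fC n) (s : ℂ) = ((Gn n s : ℝ) : ℂ) := by
  rw [mellin, Gn,
    show ((∫ t in Ioi (0:ℝ), t ^ (s - 1) * (Real.exp (-t) * Real.log t ^ n) : ℝ) : ℂ)
      = ∫ t in Ioi (0:ℝ), ((t ^ (s - 1) * (Real.exp (-t) * Real.log t ^ n) : ℝ) : ℂ)
      from integral_ofReal.symm]
  exact setIntegral_congr_fun measurableSet_Ioi (fun t ht => cpow_fC_eq n ht)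

lemma mellin_fC_zero_eq : mellin (fC 0) = Complex.GammaIntegral := by
  rw [Complex.GammaIntegral_eq_mellin]
  have h : fC 0 = fun x : ℝ => ((Real.exp (-x) : ℝ) : ℂ) := by
    funext t; simp [fC]
  rw [h]

lemma hasDerivAt_cGamma {s : ℂ} (hs : 0 < s.re) :
    HasDerivAt Complex.Gamma (mellin (fC 1) s) s := by
  refine HasDerivAt.congr_of_eventuallyEq (hasDerivAt_mellin_fC 0 hs) ?_
  filter_upwards [(isOpen_Ioi.preimage Complex.continuous_re).mem_nhds hs] with z hz
  exact (Complex.Gamma_eq_integral (hz : 0 < z.re)).trans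
    (congrFun mellin_fC_zero_eq.symm z)

lemma deriv_cGamma_eventually {s : ℂ} (hs : 0 < s.re) :
    deriv Complex.Gamma =ᶠ[𝓝 s] fun z => mellin (fC 1) z := by
  filter_upwards [(isOpen_Ioi.preimage Complex.continuous_re).mem_nhds hs] with z hz
  exact (hasDerivAt_cGamma (by exact hz)).deriv

lemma hasDerivAt_deriv_cGamma {s : ℂ} (hs : 0 < s.re) :
    HasDerivAt (deriv Complex.Gamma) (mellin (fC 2) s) s :=
  (hasDerivAt_mellin_fC 1 hs).congr_of_eventuallyEq (deriv_cGamma_eventually hs)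

lemma rGamma_eq_re : Real.Gamma = fun x : ℝ => (Complex.Gamma (x : ℂ)).re := by
  funext x; rw [Complex.Gamma_ofReal, Complex.ofReal_re]

lemma hasDerivAt_rGamma {s : ℝ} (hs : 0 < s) :
    HasDerivAt Real.Gamma (Gn 1 s) s := by
  have h := (hasDerivAt_cGamma (s := (s : ℂ)) (by simpa using hs)).real_of_complex
  rw [mellin_fC_ofReal 1 hs, Complex.ofReal_re] at h
  rwa [rGamma_eq_re]

lemma Gn0_eq {s : ℝ} (hs : 0 < s) : Gn 0 s = Real.Gamma s := by
  rw [Real.Gamma_eq_integral hs, Gn]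
  refine setIntegral_congr_fun measurableSet_Ioi (fun t ht => ?_)
  simp [mul_comm]

lemma deriv_rGamma_eq {s : ℝ} (hs : 0 < s) : deriv Real.Gamma s = Gn 1 s :=
  (hasDerivAt_rGamma hs).deriv

lemma iteratedDeriv_two_rGamma_eq {s : ℝ} (hs : 0 < s) :
    iteratedDeriv 2 Real.Gamma s = Gn 2 s := by
  rw [show (2:ℕ) = 1 + 1 from rfl, iteratedDeriv_succ, iteratedDeriv_one]
  have hev : deriv Real.Gamma =ᶠ[𝓝 s] fun x : ℝ => (mellin (fC 1) (x : ℂ)).re := by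
    filter_upwards [Ioi_mem_nhds hs] with x hx
    rw [deriv_rGamma_eq hx, mellin_fC_ofReal 1 hx, Complex.ofReal_re]
  rw [hev.deriv_eq]
  have h2 : HasDerivAt (fun x : ℝ => (mellin (fC 1) (x:ℂ)).re) (Gn 2 s) s := by
    have := (hasDerivAt_mellin_fC (n := 1) (s := (s:ℂ)) (by simpa using hs)).real_of_complex
    rwa [mellin_fC_ofReal 2 hs, Complex.ofReal_re] at this
  exact h2.deriv

lemma gn_integrable (n : ℕ) {s : ℝ} (hs : 0 < s) :
    IntegrableOn (fun u : ℝ => u ^ (s-1) * (Real.exp (-u) * Real.log u ^ n)) (Ioi 0) := by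
  have h : IntegrableOn (fun x : ℝ => RCLike.re ((x:ℂ) ^ ((s:ℂ) - 1) • fC n x)) (Ioi 0) :=
    (mellinConv_fC n (s := (s:ℂ)) (by simpa using hs)).re
  exact h.congr_fun (fun u hu => by
    dsimp only; rw [cpow_fC_eq n hu]; simp only [RCLike.re_to_complex, Complex.ofReal_re]) measurableSet_Ioi

lemma bg_key (μ σ δ t : ℝ) (hσ : 0 < σ) (ht : t < 0) :
    ∫ x : ℝ, Real.exp (t*x) * (((1 - δ*x)^2 + 1) * gumbelPDF μ σ x)
      = Real.exp (μ*t) * ((2 - 2*δ*μ + δ^2*μ^2) * Gn 0 (1-σ*t)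
        + 2*σ*δ*(1-δ*μ) * Gn 1 (1-σ*t) + σ^2*δ^2 * Gn 2 (1-σ*t)) := by
  have hs : (0:ℝ) < 1 - σ*t := by nlinarith
  have hσ' : σ ≠ 0 := hσ.ne'
  have hder : ∀ u ∈ Ioi (0:ℝ),
      HasDerivWithinAt (fun u : ℝ => μ - σ * Real.log u) (-(σ * u⁻¹)) (Ioi 0) u := by
    intro u hu
    exact (((Real.hasDerivAt_log (ne_of_gt hu)).const_mul σ).const_sub μ).hasDerivWithinAt
  have hinj : InjOn (fun u : ℝ => μ - σ * Real.log u) (Ioi 0) := by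
    intro u hu v hv h
    have h2 : Real.log u = Real.log v := by
      have : σ * Real.log u = σ * Real.log v := by dsimp at h; linarith
      exact mul_left_cancel₀ hσ' this
    rw [← Real.exp_log hu, ← Real.exp_log hv, h2]
  have himg : (fun u : ℝ => μ - σ * Real.log u) '' (Ioi 0) = univ := by
    refine eq_univ_iff_forall.mpr (fun x => ?_)
    refine ⟨Real.exp ((μ - x)/σ), Real.exp_pos _, ?_⟩
    show μ - σ * Real.log (Real.exp ((μ - x)/σ)) = x
    rw [Real.log_exp]
    field_simp
    ring
  have hsub := integral_image_eq_integral_abs_deriv_smul measurableSet_Ioi hder hinj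
    (fun x => Real.exp (t*x) * (((1 - δ*x)^2 + 1) * gumbelPDF μ σ x))
  rw [himg, setIntegral_univ] at hsub
  rw [hsub]
  have hpt : ∀ u ∈ Ioi (0:ℝ),
      |(-(σ * u⁻¹))| • (Real.exp (t*(μ - σ * Real.log u)) *
        (((1 - δ*(μ - σ * Real.log u))^2 + 1) * gumbelPDF μ σ (μ - σ * Real.log u)))
      = Real.exp (μ*t) * ((2 - 2*δ*μ + δ^2*μ^2) *
            (u ^ (1-σ*t-1) * (Real.exp (-u) * Real.log u ^ 0))
          + 2*σ*δ*(1-δ*μ) * (u ^ (1-σ*t-1) * (Real.exp (-u) * Real.log u ^ 1))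
          + σ^2*δ^2 * (u ^ (1-σ*t-1) * (Real.exp (-u) * Real.log u ^ 2))) := by
    intro u hu
    have hu' : (0:ℝ) < u := hu
    have habs : |(-(σ * u⁻¹))| = σ * u⁻¹ := by
      rw [abs_neg, abs_of_pos (by positivity)]
    have h1 : Real.exp (t*(μ - σ * Real.log u))
        = Real.exp (μ*t) * Real.exp (Real.log u * -(σ*t)) := by
      rw [← Real.exp_add]; ring_nf
    have h2 : u ^ (1-σ*t-1) = Real.exp (Real.log u * -(σ*t)) := by
      rw [Real.rpow_def_of_pos hu']; ring_nf
    have harg : -((μ - σ * Real.log u - μ)/σ) = Real.log u := by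
      field_simp
      ring
    have h3 : gumbelPDF μ σ (μ - σ * Real.log u) = (1/σ) * (u * Real.exp (-u)) := by
      rw [gumbelPDF, harg, Real.exp_sub, Real.exp_log hu', Real.exp_neg]
      ring
    rw [smul_eq_mul, habs, h1, h2, h3]
    field_simp
    ring
  rw [setIntegral_congr_fun measurableSet_Ioi hpt]
  rw [integral_const_mul]
  congr 1
  have i0 := (gn_integrable 0 hs).const_mul (2 - 2*δ*μ + δ^2*μ^2)
  have i1 := (gn_integrable 1 hs).const_mul (2*σ*δ*(1-δ*μ))
  have i2 := (gn_integrable 2 hs).const_mul (σ^2*δ^2)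
  have i01 : Integrable (fun a : ℝ =>
      (2 - 2*δ*μ + δ^2*μ^2) * (a ^ (1-σ*t-1) * (Real.exp (-a) * Real.log a ^ 0))
      + 2*σ*δ*(1-δ*μ) * (a ^ (1-σ*t-1) * (Real.exp (-a) * Real.log a ^ 1)))
      (volume.restrict (Ioi 0)) := i0.add i1
  rw [integral_add i01 i2, integral_add i0 i1,
    integral_const_mul, integral_const_mul, integral_const_mul]
  rfl

end Aux

theorem bg_mgf (μ σ δ t : ℝ) (hσ : 0 < σ) (ht : t < 0) :
    ∫ x : ℝ, Real.exp (t * x) * bgPDF μ σ δ x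
      = Real.exp (μ * t) * Real.Gamma (1 - σ * t) *
          (2 - 2 * μ * δ + μ ^ 2 * δ ^ 2
            + 2 * σ * δ * (1 - μ * δ) * digamma (1 - σ * t)
            + (σ ^ 2 * δ ^ 2 / Real.Gamma (1 - σ * t)) *
                iteratedDeriv 2 Real.Gamma (1 - σ * t)) /
        (1 + δ ^ 2 * σ ^ 2 * π ^ 2 / 6 +
          (δ * μ + δ * σ * Real.eulerMascheroniConstant - 1) ^ 2) := by
  have hs : (0:ℝ) < 1 - σ * t := by nlinarith
  have hΓ : Real.Gamma (1 - σ*t) ≠ 0 := (Real.Gamma_pos_of_pos hs).ne'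
  have hbg : ∀ x : ℝ, Real.exp (t*x) * bgPDF μ σ δ x
      = (Real.exp (t*x) * (((1 - δ*x)^2 + 1) * gumbelPDF μ σ x)) /
        (1 + δ^2*σ^2*π^2/6 + (δ*μ + δ*σ*Real.eulerMascheroniConstant - 1)^2) := by
    intro x; rw [bgPDF]; ring
  simp_rw [hbg]
  rw [MeasureTheory.integral_div, bg_key μ σ δ t hσ ht, Gn0_eq hs,
    ← deriv_rGamma_eq hs, ← iteratedDeriv_two_rGamma_eq hs]
  congr 1
  rw [digamma]
  field_simp [hΓ]
  linear_combination (-(δ*σ*deriv Real.Gamma (1 - t*σ)*2 - μ*δ^2*σ*deriv Real.Gamma (1 - t*σ)*2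
    + δ^2*σ^2*iteratedDeriv 2 Real.Gamma (1 - t*σ))) *
    mul_inv_cancel₀ (show Real.Gamma (1 - t*σ) ≠ 0 by rwa [mul_comm t σ])
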